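/- arXiv:2104.02812 — 5 statements merged into one kernel-verified Lean document; each statement's English description precedes it below -/
import Mathlib

section
/- With the generalized Apostol-Bernoulli poly-Daehee polynomials defined as above, for all n ≥ 0 one has (n+1) · 𝔅𝔇_{n,a}^{[k,m-1]}(γ,η;λ) = 𝔅𝔇_{n+1,a}^{[k,m-1]}(γ+1,η;λ) - 𝔅𝔇_{n+1,a}^{[k,m-1]}(γ,η;λ). -/
open PowerSeries Finset

noncomputable section

variable (F : Type*) [Field F] [CharZero F]

/-- Exponential generating function `Σ c n * x^n / n!`. -/
def egf (c : ℕ → F) : PowerSeries F := PowerSeries.mk fun n => c n / n.factorial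

/-- `log(1+x)` as a formal power series. -/
def logOnePlus : PowerSeries F := PowerSeries.mk fun n => if n = 0 then 0 else (-1) ^ (n + 1) / n

/-- `e^{-x}` as a formal power series. -/
def expNeg : PowerSeries F := PowerSeries.mk fun n => (-1) ^ n / n.factorial

/-- `Li_k(1 - e^{-x})`: since `(1-e^{-x})^m` has order `≥ m`, the `n`-th coefficient of the
composition is the finite sum `Σ_{m=1}^{n} m^{-k} * coeff n ((1-e^{-x})^m)`. -/
def liComp (k : ℤ) : PowerSeries F :=
  PowerSeries.mk fun n => ∑ m ∈ Finset.range (n + 1),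
    (if m = 0 then 0 else ((m : F) ^ k)⁻¹) * PowerSeries.coeff n ((1 - expNeg F) ^ m)

/-- `(1+x)^γ = Σ_j (γ)_j x^j/j!` with `(γ)_j = γ(γ-1)⋯(γ-j+1)` the falling factorial. -/
def onePlusPow (γ : F) : PowerSeries F := egf F fun j => ∏ i ∈ Finset.range j, (γ - i)

/-- Truncated exponential `Σ_{l<m} x^l/l!`. -/
def truncExp (m : ℕ) : PowerSeries F :=
  PowerSeries.mk fun l => if l < m then ((l.factorial : F))⁻¹ else 0

/-- `λ e^x - Σ_{l<m} x^l/l!`, the denominator in the generalized Apostol-Bernoulli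
generating function. -/
def bden (lam : F) (m : ℕ) : PowerSeries F := PowerSeries.C lam * PowerSeries.exp F - truncExp F m

lemma liComp_ne_zero (k : ℤ) : liComp F k ≠ 0 := by
  intro h
  have h1 : PowerSeries.coeff 1 (liComp F k) = 1 := by
    simp [liComp, Finset.sum_range_succ, expNeg, PowerSeries.coeff_mk]
  rw [h] at h1; simp at h1

lemma bden_ne_zero (lam : F) (m : ℕ) (hm : 1 ≤ m) : bden F lam m ≠ 0 := by
  intro h
  rcases eq_or_ne lam 0 with rfl | hl
  · have h0 : PowerSeries.coeff 0 (bden F 0 m) = -1 := by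
      simp [bden, truncExp, hm, Nat.lt_of_lt_of_le Nat.zero_lt_one hm]
    rw [h] at h0; simp at h0
  · have h0 : PowerSeries.coeff m (bden F lam m) = lam / m.factorial := by
      simp [bden, truncExp, PowerSeries.coeff_exp, div_eq_mul_inv]
    rw [h] at h0
    simp only [map_zero] at h0
    exact hl (by
      have := h0.symm
      field_simp at this
      exact (div_eq_zero_iff.mp this).resolve_right (Nat.cast_ne_zero.mpr (Nat.factorial_ne_zero m)))

lemma onePlus_diff (γ : F) :
    onePlusPow F (γ + 1) - onePlusPow F γ = PowerSeries.X * onePlusPow F γ := by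
  ext j
  cases j with
  | zero => simp [onePlusPow, egf]
  | succ n =>
    rw [PowerSeries.coeff_succ_X_mul]
    simp only [onePlusPow, egf, map_sub, PowerSeries.coeff_mk]
    rw [Finset.prod_range_succ' (fun i => γ + 1 - i), Finset.prod_range_succ]
    have : ∀ i ∈ Finset.range n, (γ + 1 - (i + 1 : ℕ)) = γ - i := by
      intro i _; push_cast; ring
    rw [Finset.prod_congr rfl this]
    have hn : ((n + 1).factorial : F) ≠ 0 := Nat.cast_ne_zero.mpr (Nat.factorial_ne_zero _)
    have hn' : ((n).factorial : F) ≠ 0 := Nat.cast_ne_zero.mpr (Nat.factorial_ne_zero _)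
    rw [div_sub_div_same, div_eq_div_iff hn hn', Nat.factorial_succ]
    push_cast
    ring

/-- Forward-difference relation in `γ` for the generalized Apostol-Bernoulli poly-Daehee
polynomials: `(n+1)·𝔅𝔇_n(γ,η;λ) = 𝔅𝔇_{n+1}(γ+1,η;λ) - 𝔅𝔇_{n+1}(γ,η;λ)`. -/
theorem gabpdp_difference (k : ℤ) (m a : ℕ) (hm : 1 ≤ m) (ha : 1 ≤ a)
    (γ η lam : F) (BD BD' : ℕ → F)
    (hBD : liComp F k * bden F lam m ^ a * egf F BD =
      onePlusPow F γ * logOnePlus F * PowerSeries.X ^ (m * a) *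
        PowerSeries.rescale η (PowerSeries.exp F))
    (hBD' : liComp F k * bden F lam m ^ a * egf F BD' =
      onePlusPow F (γ + 1) * logOnePlus F * PowerSeries.X ^ (m * a) *
        PowerSeries.rescale η (PowerSeries.exp F)) :
    ∀ n : ℕ, ((n : F) + 1) * BD n = BD' (n + 1) - BD (n + 1) := by
  intro n
  have hC : liComp F k * bden F lam m ^ a ≠ 0 :=
    mul_ne_zero (liComp_ne_zero F k) (pow_ne_zero _ (bden_ne_zero F lam m hm))
  have key : egf F BD' - egf F BD = PowerSeries.X * egf F BD := by
    apply mul_left_cancel₀ hC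
    rw [mul_sub, hBD', hBD, ← sub_mul, ← sub_mul, ← sub_mul, onePlus_diff,
      show liComp F k * bden F lam m ^ a * (PowerSeries.X * egf F BD) =
        PowerSeries.X * (liComp F k * bden F lam m ^ a * egf F BD) from by ring, hBD]
    ring
  have h2 := congrArg (PowerSeries.coeff (n + 1)) key
  simp only [map_sub, PowerSeries.coeff_succ_X_mul, egf, PowerSeries.coeff_mk] at h2
  have hn' : ((n.factorial : F)) ≠ 0 := Nat.cast_ne_zero.mpr (Nat.factorial_ne_zero _)
  have hn1 : (((n + 1).factorial : F)) ≠ 0 := Nat.cast_ne_zero.mpr (Nat.factorial_ne_zero _)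
  rw [div_sub_div_same, div_eq_div_iff hn1 hn', Nat.factorial_succ] at h2
  push_cast at h2
  exact mul_right_cancel₀ hn' (by linear_combination -h2)
end
end

section
/- With definitions as above, for all n ≥ 0: Σ_{j=0}^n C(n,j) · 𝔅_j^{(k)} · 𝔅𝔇_{n-j,a}^{[k,m-1]}(γ,η;λ) = Σ_{j=0}^n C(n,j) · B_j · 𝔅𝔇_{n-j,a}^{[m-1]}(γ,η;λ), where 𝔅_j^{(k)} are the poly-Bernoulli numbers (generating function Li_k(1-e^{-x})/(e^x-1)), B_j are the classical Bernoulli numbers (generating function x/(e^x-1)), 𝔅𝔇_{n,a}^{[k,m-1]}(γ,η;λ) are the generalized Apostol-Bernoulli poly-Daehee polynomials, and 𝔅𝔇_{n,a}^{[m-1]}(γ,η;λ) are defined by the generating function (1+x)^γ · (log(1+x)/x) · e^{ηx} · (x^m/(λe^x - Σ_{l=0}^{m-1} x^l/l!))^a. -/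
open PowerSeries Finset

noncomputable section

variable (F : Type*) [Field F] [CharZero F]

lemma egf_mul_coeff (c d : ℕ → F) (n : ℕ) :
    ∑ j ∈ Finset.range (n + 1), (n.choose j : F) * c j * d (n - j) =
      (n.factorial : F) * PowerSeries.coeff n (egf F c * egf F d) := by
  rw [PowerSeries.coeff_mul, Finset.Nat.sum_antidiagonal_eq_sum_range_succ_mk, Finset.mul_sum]
  refine Finset.sum_congr rfl fun j hj => ?_
  have hjn : j ≤ n := by
    simp only [Finset.mem_range] at hj; omega
  simp only [egf, PowerSeries.coeff_mk]
  rw [Nat.cast_choose F hjn]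
  have h1 : (j.factorial : F) ≠ 0 := Nat.cast_ne_zero.mpr (Nat.factorial_ne_zero j)
  have h2 : ((n - j).factorial : F) ≠ 0 := Nat.cast_ne_zero.mpr (Nat.factorial_ne_zero (n - j))
  field_simp

/-- `Σ_j C(n,j) 𝔅_j^{(k)} 𝔅𝔇_{n-j,a}^{[k,m-1]}(γ,η;λ) = Σ_j C(n,j) B_j 𝔅𝔇_{n-j,a}^{[m-1]}(γ,η;λ)`,
where `𝔅_j^{(k)}` are the poly-Bernoulli numbers, `B_j` the classical Bernoulli numbers,
and `𝔅𝔇^{[m-1]}` the `k`-free version (with `log(1+x)/x` in place of `log(1+x)/Li_k(1-e^{-x})`). -/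
theorem gabpdp_polyBernoulli_symmetry (k : ℤ) (m a : ℕ) (hm : 1 ≤ m) (ha : 1 ≤ a)
    (γ η lam : F) (Bk B BD BDm : ℕ → F)
    (hBk : (PowerSeries.exp F - 1) * egf F Bk = liComp F k)
    (hB : (PowerSeries.exp F - 1) * egf F B = PowerSeries.X)
    (hBD : liComp F k * bden F lam m ^ a * egf F BD =
      onePlusPow F γ * logOnePlus F * PowerSeries.X ^ (m * a) *
        PowerSeries.rescale η (PowerSeries.exp F))
    (hBDm : PowerSeries.X * bden F lam m ^ a * egf F BDm =
      onePlusPow F γ * logOnePlus F * PowerSeries.X ^ (m * a) *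
        PowerSeries.rescale η (PowerSeries.exp F)) :
    ∀ n : ℕ, ∑ j ∈ Finset.range (n + 1), (n.choose j : F) * Bk j * BD (n - j) =
      ∑ j ∈ Finset.range (n + 1), (n.choose j : F) * B j * BDm (n - j) := by
  intro n
  have hexp : PowerSeries.exp F - 1 ≠ 0 := by
    intro h
    have := congrArg (PowerSeries.coeff 1) h
    simp [PowerSeries.coeff_exp] at this
  have hbden : bden F lam m ≠ 0 := by
    by_cases hl : lam = 0
    · intro h
      have := congrArg (PowerSeries.coeff 0) h
      simp [bden, truncExp, PowerSeries.coeff_exp, hl] at this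
      omega
    · intro h
      have := congrArg (PowerSeries.coeff m) h
      simp [bden, truncExp, PowerSeries.coeff_exp, hl,
        Nat.cast_ne_zero.mpr (Nat.factorial_ne_zero m)] at this
  have hne : (PowerSeries.exp F - 1) * bden F lam m ^ a ≠ 0 :=
    mul_ne_zero hexp (pow_ne_zero a hbden)
  have h1 : (PowerSeries.exp F - 1) * bden F lam m ^ a * (egf F Bk * egf F BD) =
      (PowerSeries.exp F - 1) * bden F lam m ^ a * (egf F B * egf F BDm) := by
    calc (PowerSeries.exp F - 1) * bden F lam m ^ a * (egf F Bk * egf F BD)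
        = ((PowerSeries.exp F - 1) * egf F Bk) * bden F lam m ^ a * egf F BD := by ring
      _ = liComp F k * bden F lam m ^ a * egf F BD := by rw [hBk]
      _ = ((PowerSeries.exp F - 1) * egf F B) * bden F lam m ^ a * egf F BDm := by
          rw [hBD, hB, hBDm]
      _ = (PowerSeries.exp F - 1) * bden F lam m ^ a * (egf F B * egf F BDm) := by ring
  have h2 : egf F Bk * egf F BD = egf F B * egf F BDm := mul_left_cancel₀ hne h1
  rw [egf_mul_coeff, egf_mul_coeff, h2]
end
end

section
/- With definitions as above, the generalized Apostol-Bernoulli polynomials can be recovered from the generalized Apostol-Bernoulli poly-Daehee polynomials: 𝔅_{n,a}^{[m-1]}(η;λ) = Σ_{j=0}^n C(n,j) · 𝔟_j^{(k)}(-γ) · 𝔅𝔇_{n-j,a}^{[k,m-1]}(γ,η;λ), where 𝔟_n^{(k)}(γ) are the poly-Bernoulli polynomials of the second kind defined by (1+x)^γ · Li_k(1-e^{-x})/log(1+x) = Σ_n 𝔟_n^{(k)}(γ) x^n/n!. -/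
open PowerSeries Finset

noncomputable section

variable (F : Type*) [Field F] [CharZero F]

omit [CharZero F] in
lemma prod_sub_eq_smeval (r : F) (j : ℕ) :
    ∏ i ∈ Finset.range j, (r - i) = (descPochhammer ℤ j).smeval r := by
  induction j with
  | zero => simp
  | succ j ih =>
    rw [Finset.prod_range_succ, ih, descPochhammer_succ_right, Polynomial.smeval_mul,
      Polynomial.smeval_sub, Polynomial.smeval_X, Polynomial.smeval_natCast]
    simp

lemma onePlusPow_mul (γ δ : F) :
    onePlusPow F γ * onePlusPow F δ = onePlusPow F (γ + δ) := by
  ext n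
  rw [PowerSeries.coeff_mul]
  simp only [onePlusPow, egf, coeff_mk]
  rw [prod_sub_eq_smeval, Ring.descPochhammer_smeval_add n (mul_comm γ δ), Finset.sum_div]
  refine Finset.sum_congr rfl fun ij hij => ?_
  obtain ⟨i, j, rfl⟩ : ∃ i j, ij = (i, j) := ⟨ij.1, ij.2, rfl⟩
  have hij' : i + j = n := by simpa using hij
  rw [← prod_sub_eq_smeval, ← prod_sub_eq_smeval]
  subst hij'
  rw [Nat.cast_add_choose]
  have hi : (i.factorial : F) ≠ 0 := Nat.cast_ne_zero.mpr i.factorial_ne_zero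
  have hj : (j.factorial : F) ≠ 0 := Nat.cast_ne_zero.mpr j.factorial_ne_zero
  have hn : ((i + j).factorial : F) ≠ 0 := Nat.cast_ne_zero.mpr (i + j).factorial_ne_zero
  field_simp

lemma onePlusPow_zero : onePlusPow F 0 = 1 := by
  ext n
  simp only [onePlusPow, egf, coeff_mk, PowerSeries.coeff_one]
  cases n with
  | zero => simp
  | succ n =>
    rw [Finset.prod_eq_zero (Finset.mem_range.mpr n.succ_pos)]
    · simp
    · simp

/-- The generalized Apostol-Bernoulli polynomials are recovered from the generalized
Apostol-Bernoulli poly-Daehee polynomials via the poly-Bernoulli polynomials of the second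
kind evaluated at `-γ`: `𝔅_{n,a}^{[m-1]}(η;λ) = Σ_j C(n,j) 𝔟_j^{(k)}(-γ) 𝔅𝔇_{n-j,a}^{[k,m-1]}(γ,η;λ)`. -/
theorem apostolBernoulli_from_gabpdp (k : ℤ) (m a : ℕ) (hm : 1 ≤ m) (ha : 1 ≤ a)
    (γ η lam : F) (B b BD : ℕ → F)
    (hb : logOnePlus F * egf F b = onePlusPow F (-γ) * liComp F k)
    (hB : bden F lam m ^ a * egf F B =
      PowerSeries.X ^ (m * a) * PowerSeries.rescale η (PowerSeries.exp F))
    (hBD : liComp F k * bden F lam m ^ a * egf F BD =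
      onePlusPow F γ * logOnePlus F * PowerSeries.X ^ (m * a) *
        PowerSeries.rescale η (PowerSeries.exp F)) :
    ∀ n : ℕ, B n = ∑ j ∈ Finset.range (n + 1), (n.choose j : F) * b j * BD (n - j) := by
  have hnz : liComp F k * bden F lam m ^ a ≠ 0 :=
    mul_ne_zero (liComp_ne_zero F k) (pow_ne_zero a (bden_ne_zero F lam m hm))
  have key : liComp F k * bden F lam m ^ a * (egf F b * egf F BD) =
      liComp F k * bden F lam m ^ a * egf F B := by
    calc liComp F k * bden F lam m ^ a * (egf F b * egf F BD)
        = egf F b * (liComp F k * bden F lam m ^ a * egf F BD) := by ring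
      _ = egf F b * (onePlusPow F γ * logOnePlus F * PowerSeries.X ^ (m * a) *
            PowerSeries.rescale η (PowerSeries.exp F)) := by rw [hBD]
      _ = onePlusPow F γ * (logOnePlus F * egf F b) *
            (PowerSeries.X ^ (m * a) * PowerSeries.rescale η (PowerSeries.exp F)) := by ring
      _ = onePlusPow F γ * (onePlusPow F (-γ) * liComp F k) *
            (PowerSeries.X ^ (m * a) * PowerSeries.rescale η (PowerSeries.exp F)) := by rw [hb]
      _ = liComp F k * (PowerSeries.X ^ (m * a) *
            PowerSeries.rescale η (PowerSeries.exp F)) := by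
          have h2 : onePlusPow F γ * onePlusPow F (-γ) = 1 := by
            rw [onePlusPow_mul, add_neg_cancel, onePlusPow_zero]
          linear_combination (liComp F k *
            (PowerSeries.X ^ (m * a) * PowerSeries.rescale η (PowerSeries.exp F))) * h2
      _ = liComp F k * (bden F lam m ^ a * egf F B) := by rw [hB]
      _ = liComp F k * bden F lam m ^ a * egf F B := by ring
  have hmul : egf F B = egf F b * egf F BD := (mul_left_cancel₀ hnz key).symm
  intro n
  have hc := congrArg (PowerSeries.coeff n) hmul
  rw [PowerSeries.coeff_mul] at hc
  simp only [egf, coeff_mk] at hc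
  have hn : ((n.factorial : F)) ≠ 0 := Nat.cast_ne_zero.mpr n.factorial_ne_zero
  rw [Finset.Nat.sum_antidiagonal_eq_sum_range_succ_mk] at hc
  have := congrArg (fun x => (n.factorial : F) * x) hc
  simp only [Finset.mul_sum] at this
  rw [mul_div_cancel₀ _ hn] at this
  rw [this]
  refine Finset.sum_congr rfl fun j hj => ?_
  have hjn : j ≤ n := Nat.lt_succ_iff.mp (Finset.mem_range.mp hj)
  rw [Nat.cast_choose F hjn]
  have hj' : ((j.factorial : F)) ≠ 0 := Nat.cast_ne_zero.mpr j.factorial_ne_zero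
  have hnj : (((n - j).factorial : F)) ≠ 0 := Nat.cast_ne_zero.mpr (n - j).factorial_ne_zero
  field_simp

end
end

section
/- With definitions as above, the generalized Apostol-Bernoulli poly-Daehee polynomials satisfy the addition theorem in the order and second argument: 𝔅𝔇_{n,a+b}^{[k,m-1]}(γ,η+ω;λ) = Σ_{j=0}^n C(n,j) · 𝔅𝔇_{n-j,a}^{[k,m-1]}(γ,η;λ) · 𝔅_{j,b}^{[m-1]}(ω;λ). -/
open PowerSeries Finset

noncomputable section

variable (F : Type*) [Field F] [CharZero F]

lemma egf_mul_egf (c d : ℕ → F) :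
    egf F c * egf F d =
      egf F (fun n => ∑ j ∈ Finset.range (n + 1), (n.choose j : F) * c (n - j) * d j) := by
  ext n
  rw [PowerSeries.coeff_mul]
  simp only [egf, PowerSeries.coeff_mk]
  rw [Finset.Nat.sum_antidiagonal_eq_sum_range_succ (fun i j => c i / i.factorial * (d j / j.factorial))]
  rw [Finset.sum_div, ← Finset.sum_range_reflect]
  refine Finset.sum_congr rfl fun i hi => ?_
  have hin : i ≤ n := Nat.lt_succ_iff.mp (Finset.mem_range.mp hi)
  have h1 : (i.factorial : F) ≠ 0 := Nat.cast_ne_zero.mpr i.factorial_ne_zero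
  have h2 : ((n - i).factorial : F) ≠ 0 := Nat.cast_ne_zero.mpr (n - i).factorial_ne_zero
  have h3 : (n.factorial : F) ≠ 0 := Nat.cast_ne_zero.mpr n.factorial_ne_zero
  have hrev : n - (n - i) = i := Nat.sub_sub_self hin
  simp only [Nat.succ_sub_one, hrev]
  rw [Nat.cast_choose F hin]
  field_simp

lemma egf_inj (c d : ℕ → F) (h : egf F c = egf F d) : ∀ n, c n = d n := by
  intro n
  have := congrArg (PowerSeries.coeff n) h
  simp only [egf, PowerSeries.coeff_mk] at this
  have h3 : (n.factorial : F) ≠ 0 := Nat.cast_ne_zero.mpr n.factorial_ne_zero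
  field_simp at this
  exact this

/-- Addition theorem in the order and the second argument:
`𝔅𝔇_{n,a+b}^{[k,m-1]}(γ,η+ω;λ) = Σ_j C(n,j) 𝔅𝔇_{n-j,a}^{[k,m-1]}(γ,η;λ) 𝔅_{j,b}^{[m-1]}(ω;λ)`. -/
theorem gabpdp_addition_order (k : ℤ) (m a b : ℕ) (hm : 1 ≤ m) (ha : 1 ≤ a) (hb : 1 ≤ b)
    (γ η ω lam : F) (BD Bb BDab : ℕ → F)
    (hBD : liComp F k * bden F lam m ^ a * egf F BD =
      onePlusPow F γ * logOnePlus F * PowerSeries.X ^ (m * a) *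
        PowerSeries.rescale η (PowerSeries.exp F))
    (hBb : bden F lam m ^ b * egf F Bb =
      PowerSeries.X ^ (m * b) * PowerSeries.rescale ω (PowerSeries.exp F))
    (hBDab : liComp F k * bden F lam m ^ (a + b) * egf F BDab =
      onePlusPow F γ * logOnePlus F * PowerSeries.X ^ (m * (a + b)) *
        PowerSeries.rescale (η + ω) (PowerSeries.exp F)) :
    ∀ n : ℕ, BDab n = ∑ j ∈ Finset.range (n + 1), (n.choose j : F) * BD (n - j) * Bb j := by
  have key : liComp F k * bden F lam m ^ (a + b) * egf F BDab =
      liComp F k * bden F lam m ^ (a + b) * (egf F BD * egf F Bb) := by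
    rw [hBDab]
    have := congrArg₂ (· * ·) hBD hBb
    calc onePlusPow F γ * logOnePlus F * PowerSeries.X ^ (m * (a + b)) *
          PowerSeries.rescale (η + ω) (PowerSeries.exp F)
        = (onePlusPow F γ * logOnePlus F * PowerSeries.X ^ (m * a) *
            PowerSeries.rescale η (PowerSeries.exp F)) *
          (PowerSeries.X ^ (m * b) * PowerSeries.rescale ω (PowerSeries.exp F)) := by
          rw [← PowerSeries.exp_mul_exp_eq_exp_add η ω, Nat.mul_add, pow_add]
          ring
      _ = (liComp F k * bden F lam m ^ a * egf F BD) *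
            (bden F lam m ^ b * egf F Bb) := by rw [hBD, hBb]
      _ = liComp F k * bden F lam m ^ (a + b) * (egf F BD * egf F Bb) := by
          rw [pow_add]; ring
  have hnz : liComp F k * bden F lam m ^ (a + b) ≠ 0 :=
    mul_ne_zero (liComp_ne_zero F k) (pow_ne_zero _ (bden_ne_zero F lam m hm))
  have heq : egf F BDab = egf F BD * egf F Bb := mul_left_cancel₀ hnz key
  rw [egf_mul_egf] at heq
  exact egf_inj F _ _ heq
end
end

section
/- The two-variable symmetry identity holds: for all b, c ≥ 0 and parameters η, ω, 𝔅𝔇_{a;b+c}^{[k,m-1]}(γ,η;λ) = Σ_{n=0}^{b} Σ_{q=0}^{c} C(b,n) C(c,q) (η-ω)^{n+q} · 𝔅𝔇_{a;b+c-n-q}^{[k,m-1]}(γ,ω;λ), where 𝔅𝔇_{a;N}^{[k,m-1]}(γ,η;λ) denotes the N-th generalized Apostol-Bernoulli poly-Daehee polynomial. -/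
open PowerSeries Finset

noncomputable section

variable (F : Type*) [Field F] [CharZero F]

lemma egf_conv (y : F) (BD BDw : ℕ → F)
    (key : egf F BD = egf F BDw * PowerSeries.rescale y (PowerSeries.exp F)) (N : ℕ) :
    BD N = ∑ j ∈ Finset.range (N + 1), (N.choose j : F) * y ^ j * BDw (N - j) := by
  have h1 := congrArg (PowerSeries.coeff N) key
  rw [PowerSeries.coeff_mul, Finset.Nat.sum_antidiagonal_eq_sum_range_succ_mk] at h1
  simp only [egf, coeff_mk, coeff_rescale, PowerSeries.coeff_exp, one_div, map_inv₀,
    map_natCast] at h1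
  have hN : (N.factorial : F) ≠ 0 := Nat.cast_ne_zero.mpr N.factorial_ne_zero
  rw [div_eq_iff hN] at h1
  rw [h1, Finset.sum_mul]
  conv_rhs => rw [← Finset.sum_range_reflect]
  apply Finset.sum_congr rfl
  intro j hj
  rw [Finset.mem_range, Nat.lt_succ_iff] at hj
  have h2 : N + 1 - 1 - j = N - j := by omega
  have h3 : N - (N - j) = j := Nat.sub_sub_self hj
  rw [h2, h3, Nat.choose_symm hj, Nat.cast_choose F hj]
  have hj1 : (j.factorial : F) ≠ 0 := Nat.cast_ne_zero.mpr j.factorial_ne_zero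
  have hj2 : ((N - j).factorial : F) ≠ 0 := Nat.cast_ne_zero.mpr (N - j).factorial_ne_zero
  field_simp

lemma tri_sum {M : Type*} [AddCommMonoid M] (S : ℕ) (f : ℕ → ℕ → M) :
    ∑ j ∈ range (S + 1), ∑ n ∈ range (j + 1), f n (j - n)
      = ∑ n ∈ range (S + 1), ∑ q ∈ range (S + 1 - n), f n q := by
  rw [Finset.sum_sigma', Finset.sum_sigma']
  refine Finset.sum_nbij' (fun x => ⟨x.2, x.1 - x.2⟩) (fun x => ⟨x.1 + x.2, x.1⟩)
    ?_ ?_ ?_ ?_ ?_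
  · rintro ⟨a, b⟩ h
    simp only [Finset.mem_sigma, Finset.mem_range] at *
    omega
  · rintro ⟨a, b⟩ h
    simp only [Finset.mem_sigma, Finset.mem_range] at *
    omega
  · rintro ⟨a, b⟩ h
    simp only [Finset.mem_sigma, Finset.mem_range] at h
    show (⟨b + (a - b), b⟩ : (_ : ℕ) × ℕ) = ⟨a, b⟩
    rw [Nat.add_sub_cancel' (by omega : b ≤ a)]
  · rintro ⟨a, b⟩ h
    simp only [Finset.mem_sigma, Finset.mem_range] at h
    show (⟨a, a + b - a⟩ : (_ : ℕ) × ℕ) = ⟨a, b⟩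
    rw [Nat.add_sub_cancel_left]
  · rintro ⟨a, b⟩ h
    rfl

/-- The implicit two-variable summation formula:
`𝔅𝔇_{b+c}(γ,η;λ) = Σ_{n≤b} Σ_{q≤c} C(b,n) C(c,q) (η-ω)^{n+q} 𝔅𝔇_{b+c-n-q}(γ,ω;λ)`. -/
theorem gabpdp_implicit_summation (k : ℤ) (m a : ℕ) (hm : 1 ≤ m) (ha : 1 ≤ a)
    (γ η ω lam : F) (BD BDw : ℕ → F)
    (hBD : liComp F k * bden F lam m ^ a * egf F BD =
      onePlusPow F γ * logOnePlus F * PowerSeries.X ^ (m * a) *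
        PowerSeries.rescale η (PowerSeries.exp F))
    (hBDw : liComp F k * bden F lam m ^ a * egf F BDw =
      onePlusPow F γ * logOnePlus F * PowerSeries.X ^ (m * a) *
        PowerSeries.rescale ω (PowerSeries.exp F)) :
    ∀ b c : ℕ, BD (b + c) =
      ∑ n ∈ Finset.range (b + 1), ∑ q ∈ Finset.range (c + 1),
        (b.choose n : F) * (c.choose q : F) * (η - ω) ^ (n + q) * BDw (b + c - n - q) := by
  intro b c
  have hL : liComp F k * bden F lam m ^ a ≠ 0 :=
    mul_ne_zero (liComp_ne_zero F k) (pow_ne_zero _ (bden_ne_zero F lam m hm))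
  have hexp : PowerSeries.rescale η (PowerSeries.exp F) =
      PowerSeries.rescale (η - ω) (PowerSeries.exp F) *
        PowerSeries.rescale ω (PowerSeries.exp F) := by
    rw [PowerSeries.exp_mul_exp_eq_exp_add, sub_add_cancel]
  have key : egf F BD = egf F BDw * PowerSeries.rescale (η - ω) (PowerSeries.exp F) := by
    apply mul_left_cancel₀ hL
    rw [hBD, hexp]
    linear_combination (-(PowerSeries.rescale (η - ω) (PowerSeries.exp F))) * hBDw
  have hco := egf_conv F (η - ω) BD BDw key (b + c)
  rw [hco]
  have hvan : ∀ j, (((b + c).choose j : ℕ) : F)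
      = ∑ n ∈ range (j + 1), (b.choose n : F) * (c.choose (j - n) : F) := by
    intro j
    rw [Nat.add_choose_eq, Finset.Nat.sum_antidiagonal_eq_sum_range_succ_mk]
    push_cast
    rfl
  have step1 : ∑ j ∈ range (b + c + 1), ((b + c).choose j : F) * (η - ω) ^ j * BDw (b + c - j)
      = ∑ n ∈ range (b + c + 1), ∑ q ∈ range (b + c + 1 - n),
          (b.choose n : F) * (c.choose q : F) * (η - ω) ^ (n + q) * BDw (b + c - n - q) := by
    rw [← tri_sum]
    apply Finset.sum_congr rfl
    intro j hj
    rw [Finset.mem_range, Nat.lt_succ_iff] at hj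
    rw [hvan j, Finset.sum_mul, Finset.sum_mul]
    apply Finset.sum_congr rfl
    intro n hn
    rw [Finset.mem_range, Nat.lt_succ_iff] at hn
    have e1 : n + (j - n) = j := by omega
    have e2 : b + c - n - (j - n) = b + c - j := by omega
    rw [e1, e2]
  have step2 : (∑ n ∈ range (b + c + 1), ∑ q ∈ range (b + c + 1 - n),
          (b.choose n : F) * (c.choose q : F) * (η - ω) ^ (n + q) * BDw (b + c - n - q))
      = ∑ n ∈ range (b + 1), ∑ q ∈ range (c + 1),
          (b.choose n : F) * (c.choose q : F) * (η - ω) ^ (n + q) * BDw (b + c - n - q) := by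
    have h1 : (∑ n ∈ range (b + 1), ∑ q ∈ range (b + c + 1 - n),
            (b.choose n : F) * (c.choose q : F) * (η - ω) ^ (n + q) * BDw (b + c - n - q))
        = ∑ n ∈ range (b + c + 1), ∑ q ∈ range (b + c + 1 - n),
            (b.choose n : F) * (c.choose q : F) * (η - ω) ^ (n + q) * BDw (b + c - n - q) := by
      apply Finset.sum_subset (Finset.range_subset_range.mpr (by omega))
      intro n _ hn'
      rw [Finset.mem_range, Nat.lt_succ_iff, not_le] at hn'
      have hb : (b.choose n : F) = 0 := by
        rw [Nat.choose_eq_zero_of_lt hn']; norm_num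
      apply Finset.sum_eq_zero
      intro q _
      rw [hb]
      ring
    rw [← h1]
    apply Finset.sum_congr rfl
    intro n hn
    rw [Finset.mem_range, Nat.lt_succ_iff] at hn
    symm
    apply Finset.sum_subset (Finset.range_subset_range.mpr (by omega))
    intro q _ hq'
    rw [Finset.mem_range, Nat.lt_succ_iff, not_le] at hq'
    have hc : (c.choose q : F) = 0 := by
      rw [Nat.choose_eq_zero_of_lt hq']; norm_num
    rw [hc]
    ring
  rw [step1, step2]
end
end
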